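/- arXiv:1510.04181 — 8 statements merged into one kernel-verified Lean document; each statement's English description precedes it below -/
import Mathlib

section
/- Let r̲, r̄ : ℓ∞^{n-1} → ℝ be 1-Lipschitz with r̲ ≤ r̄ pointwise. Then the map φ : ℓ∞^n → ℓ∞^n, φ(x) = (p([r̲(x̂₁), r̄(x̂₁)], x₁), x₂, …, xₙ), is 1-Lipschitz. -/
/-- The map `φ(x) = (p([r̲(x̂₁), r̄(x̂₁)], x₁), x₂, …, xₙ)` projecting the first coordinate
onto the interval given by two 1-Lipschitz bounds is 1-Lipschitz on `ℓ∞ⁿ`. -/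
theorem phi_lipschitz {n : ℕ} (rlo rhi : (Fin n → ℝ) → ℝ)
    (hlo : LipschitzWith 1 rlo) (hhi : LipschitzWith 1 rhi)
    (hle : ∀ y : Fin n → ℝ, rlo y ≤ rhi y) :
    LipschitzWith 1 (fun x : Fin (n + 1) → ℝ =>
      (Fin.cons (min (max (rlo (x ∘ Fin.succ)) (x 0)) (rhi (x ∘ Fin.succ)))
        (x ∘ Fin.succ) : Fin (n + 1) → ℝ)) := by
  apply LipschitzWith.of_dist_le_mul
  intro x y
  rw [NNReal.coe_one, one_mul]
  have hxy : (0 : ℝ) ≤ dist x y := dist_nonneg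
  have htail : dist (x ∘ Fin.succ) (y ∘ Fin.succ) ≤ dist x y := by
    refine (dist_pi_le_iff hxy).2 fun i => ?_
    exact dist_le_pi_dist x y i.succ
  refine (dist_pi_le_iff hxy).2 fun i => ?_
  refine Fin.cases ?_ (fun i => ?_) i
  · simp only [Fin.cons_zero]
    rw [Real.dist_eq]
    have h1 : |max (rlo (x ∘ Fin.succ)) (x 0) - max (rlo (y ∘ Fin.succ)) (y 0)| ≤
        max |rlo (x ∘ Fin.succ) - rlo (y ∘ Fin.succ)| |x 0 - y 0| :=
      abs_max_sub_max_le_max _ _ _ _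
    have h2 : |min (max (rlo (x ∘ Fin.succ)) (x 0)) (rhi (x ∘ Fin.succ)) -
        min (max (rlo (y ∘ Fin.succ)) (y 0)) (rhi (y ∘ Fin.succ))| ≤
        max |max (rlo (x ∘ Fin.succ)) (x 0) - max (rlo (y ∘ Fin.succ)) (y 0)|
          |rhi (x ∘ Fin.succ) - rhi (y ∘ Fin.succ)| :=
      abs_min_sub_min_le_max _ _ _ _
    have hlo' : |rlo (x ∘ Fin.succ) - rlo (y ∘ Fin.succ)| ≤ dist x y := by
      have := hlo.dist_le_mul (x ∘ Fin.succ) (y ∘ Fin.succ)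
      rw [NNReal.coe_one, one_mul, Real.dist_eq] at this
      exact this.trans htail
    have hhi' : |rhi (x ∘ Fin.succ) - rhi (y ∘ Fin.succ)| ≤ dist x y := by
      have := hhi.dist_le_mul (x ∘ Fin.succ) (y ∘ Fin.succ)
      rw [NNReal.coe_one, one_mul, Real.dist_eq] at this
      exact this.trans htail
    have h0 : |x 0 - y 0| ≤ dist x y := by
      have := dist_le_pi_dist x y 0
      rwa [Real.dist_eq] at this
    exact h2.trans (max_le (h1.trans (max_le hlo' h0)) hhi')
  · simp only [Fin.cons_succ]
    exact dist_le_pi_dist x y i.succ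
end

section
/- Let r̲, r̄ : ℓ∞^{n-1} → ℝ be 1-Lipschitz with r̲ ≤ r̄ pointwise. Then the set Q = { x ∈ ℓ∞^n | r̲(x̂₁) ≤ x₁ ≤ r̄(x̂₁) } is a nonempty 1-Lipschitz retract of ℓ∞^n, and hence an injective metric space. -/
/-- A metric space is injective if every 1-Lipschitz map into it from a subset of any
metric space admits a 1-Lipschitz extension. -/
def IsInjective (X : Type*) [MetricSpace X] : Prop :=
  ∀ (B : Type*) (_ : MetricSpace B) (A : Set B) (f : A → X), LipschitzWith 1 f →
    ∃ g : B → X, LipschitzWith 1 g ∧ ∀ a : A, g a = f a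

noncomputable def clampMap {n : ℕ} (rlo rhi : (Fin n → ℝ) → ℝ)
    (x : Fin (n + 1) → ℝ) : Fin (n + 1) → ℝ :=
  Fin.cons (max (rlo (x ∘ Fin.succ)) (min (x 0) (rhi (x ∘ Fin.succ)))) (fun i => x i.succ)

lemma clampMap_succ {n : ℕ} (rlo rhi : (Fin n → ℝ) → ℝ) (x : Fin (n + 1) → ℝ) :
    (clampMap rlo rhi x) ∘ Fin.succ = x ∘ Fin.succ := by
  funext i; simp [clampMap]

lemma clampMap_lipschitz {n : ℕ} (rlo rhi : (Fin n → ℝ) → ℝ)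
    (hlo : LipschitzWith 1 rlo) (hhi : LipschitzWith 1 rhi) :
    LipschitzWith 1 (clampMap rlo rhi) := by
  apply LipschitzWith.of_dist_le_mul
  intro x x'
  rw [NNReal.coe_one, one_mul, dist_pi_le_iff dist_nonneg]
  have hsucc : dist (x ∘ Fin.succ) (x' ∘ Fin.succ) ≤ dist x x' := by
    rw [dist_pi_le_iff dist_nonneg]
    intro j
    exact dist_le_pi_dist x x' j.succ
  have hlo' : dist (rlo (x ∘ Fin.succ)) (rlo (x' ∘ Fin.succ)) ≤ dist x x' := by
    calc _ ≤ 1 * dist (x ∘ Fin.succ) (x' ∘ Fin.succ) := hlo.dist_le_mul _ _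
    _ ≤ dist x x' := by rw [one_mul]; exact hsucc
  have hhi' : dist (rhi (x ∘ Fin.succ)) (rhi (x' ∘ Fin.succ)) ≤ dist x x' := by
    calc _ ≤ 1 * dist (x ∘ Fin.succ) (x' ∘ Fin.succ) := hhi.dist_le_mul _ _
    _ ≤ dist x x' := by rw [one_mul]; exact hsucc
  have h0 : dist (x 0) (x' 0) ≤ dist x x' := dist_le_pi_dist x x' 0
  intro i
  refine Fin.cases ?_ ?_ i
  · simp only [clampMap, Fin.cons_zero]
    rw [Real.dist_eq]
    calc |max (rlo (x ∘ Fin.succ)) (min (x 0) (rhi (x ∘ Fin.succ))) -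
            max (rlo (x' ∘ Fin.succ)) (min (x' 0) (rhi (x' ∘ Fin.succ)))|
        ≤ max |rlo (x ∘ Fin.succ) - rlo (x' ∘ Fin.succ)|
            |min (x 0) (rhi (x ∘ Fin.succ)) - min (x' 0) (rhi (x' ∘ Fin.succ))| :=
          abs_max_sub_max_le_max _ _ _ _
      _ ≤ dist x x' := by
          apply max_le
          · rw [← Real.dist_eq]; exact hlo'
          · calc |min (x 0) (rhi (x ∘ Fin.succ)) - min (x' 0) (rhi (x' ∘ Fin.succ))|
                ≤ max |x 0 - x' 0| |rhi (x ∘ Fin.succ) - rhi (x' ∘ Fin.succ)| :=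
                  abs_min_sub_min_le_max _ _ _ _
              _ ≤ dist x x' := by
                  apply max_le
                  · rw [← Real.dist_eq]; exact h0
                  · rw [← Real.dist_eq]; exact hhi'
  · intro j
    simp only [clampMap, Fin.cons_succ]
    exact dist_le_pi_dist x x' j.succ

/-- The set `Q = { x ∈ ℓ∞ⁿ | r̲(x̂₁) ≤ x₁ ≤ r̄(x̂₁) }` determined by two 1-Lipschitz bounds
is a nonempty 1-Lipschitz retract of `ℓ∞ⁿ`, and hence injective. -/
theorem slab_injective {n : ℕ} (rlo rhi : (Fin n → ℝ) → ℝ)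
    (hlo : LipschitzWith 1 rlo) (hhi : LipschitzWith 1 rhi)
    (hle : ∀ y : Fin n → ℝ, rlo y ≤ rhi y) :
    ({x : Fin (n + 1) → ℝ | rlo (x ∘ Fin.succ) ≤ x 0 ∧ x 0 ≤ rhi (x ∘ Fin.succ)}).Nonempty ∧
    (∃ φ : (Fin (n + 1) → ℝ) → (Fin (n + 1) → ℝ), LipschitzWith 1 φ ∧
      (∀ x, φ x ∈ {x : Fin (n + 1) → ℝ | rlo (x ∘ Fin.succ) ≤ x 0 ∧ x 0 ≤ rhi (x ∘ Fin.succ)}) ∧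
      (∀ x ∈ {x : Fin (n + 1) → ℝ | rlo (x ∘ Fin.succ) ≤ x 0 ∧ x 0 ≤ rhi (x ∘ Fin.succ)}, φ x = x)) ∧
    IsInjective ({x : Fin (n + 1) → ℝ | rlo (x ∘ Fin.succ) ≤ x 0 ∧ x 0 ≤ rhi (x ∘ Fin.succ)}) := by
  set Q : Set (Fin (n + 1) → ℝ) :=
    {x : Fin (n + 1) → ℝ | rlo (x ∘ Fin.succ) ≤ x 0 ∧ x 0 ≤ rhi (x ∘ Fin.succ)} with hQ
  have hmem : ∀ x, clampMap rlo rhi x ∈ Q := by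
    intro x
    constructor
    · rw [clampMap_succ]
      simp only [clampMap, Fin.cons_zero]
      exact le_max_left _ _
    · rw [clampMap_succ]
      simp only [clampMap, Fin.cons_zero]
      exact max_le (hle _) (min_le_right _ _)
  have hfix : ∀ x ∈ Q, clampMap rlo rhi x = x := by
    intro x hx
    funext i
    refine Fin.cases ?_ ?_ i
    · simp only [clampMap, Fin.cons_zero]
      rw [min_eq_left hx.2, max_eq_right hx.1]
    · intro j; simp [clampMap]
  refine ⟨⟨_, hmem 0⟩, ⟨clampMap rlo rhi, clampMap_lipschitz rlo rhi hlo hhi, hmem, hfix⟩, ?_⟩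
  intro B _ A f hf
  classical
  set F : B → Fin (n + 1) → ℝ := fun b => if h : b ∈ A then (f ⟨b, h⟩ : Fin (n + 1) → ℝ) else 0
    with hF
  have hFlip : LipschitzOnWith 1 F A := by
    apply LipschitzOnWith.of_dist_le_mul
    intro a ha b hb
    simp only [hF, dif_pos ha, dif_pos hb]
    calc dist ((f ⟨a, ha⟩ : Q) : Fin (n + 1) → ℝ) ((f ⟨b, hb⟩ : Q) : Fin (n + 1) → ℝ)
        = dist (f ⟨a, ha⟩) (f ⟨b, hb⟩) := rfl
      _ ≤ 1 * dist (⟨a, ha⟩ : A) (⟨b, hb⟩ : A) := hf.dist_le_mul _ _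
      _ = 1 * dist a b := rfl
  obtain ⟨g, hg, hgf⟩ := hFlip.extend_pi
  refine ⟨fun b => ⟨clampMap rlo rhi (g b), hmem _⟩, ?_, ?_⟩
  · apply LipschitzWith.of_dist_le_mul
    intro a b
    calc dist (clampMap rlo rhi (g a)) (clampMap rlo rhi (g b))
        ≤ 1 * dist (g a) (g b) := (clampMap_lipschitz rlo rhi hlo hhi).dist_le_mul _ _
      _ ≤ 1 * (1 * dist a b) := by
          have := hg.dist_le_mul a b
          gcongr
          simpa using this
      _ = 1 * dist a b := by ring
  · rintro ⟨a, ha⟩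
    have h1 : g a = F a := (hgf ha).symm
    have h2 : F a = (f ⟨a, ha⟩ : Fin (n + 1) → ℝ) := by simp [hF, ha]
    apply Subtype.ext
    show clampMap rlo rhi (g a) = _
    rw [h1, h2, hfix _ (f ⟨a, ha⟩).2]
end

section
/- Let 0 ≤ λ < 1 and for i = 1,…,n let r̲ᵢ, r̄ᵢ : ℓ∞^{n-1} → ℝ be λ-Lipschitz maps with r̲ᵢ ≤ r̄ᵢ pointwise. Then the set Q = { x ∈ ℓ∞^n | r̲ᵢ(x̂ᵢ) ≤ xᵢ ≤ r̄ᵢ(x̂ᵢ) for all i } is nonempty. -/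
/-- If all bounds `r̲ᵢ ≤ r̄ᵢ` are `λ`-Lipschitz with `λ < 1`, the system of inequalities
`r̲ᵢ(x̂ᵢ) ≤ xᵢ ≤ r̄ᵢ(x̂ᵢ)` (for all `i`) is solvable. -/
theorem system_solvable {n : ℕ} (lam : NNReal) (hlam : lam < 1)
    (rlo rhi : Fin (n + 1) → (Fin n → ℝ) → ℝ)
    (hlo : ∀ i, LipschitzWith lam (rlo i)) (hhi : ∀ i, LipschitzWith lam (rhi i))
    (hle : ∀ i (y : Fin n → ℝ), rlo i y ≤ rhi i y) :
    ∃ x : Fin (n + 1) → ℝ, ∀ i : Fin (n + 1),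
      rlo i (x ∘ i.succAbove) ≤ x i ∧ x i ≤ rhi i (x ∘ i.succAbove) := by
  set F : (Fin (n + 1) → ℝ) → (Fin (n + 1) → ℝ) :=
    fun x i => rlo i (x ∘ i.succAbove) with hF
  have hres : ∀ i : Fin (n + 1),
      LipschitzWith 1 (fun x : Fin (n + 1) → ℝ => x ∘ i.succAbove) := by
    intro i
    have : ∀ j : Fin n, LipschitzWith 1
        (fun x : Fin (n + 1) → ℝ => (x ∘ i.succAbove) j) := fun j =>
      LipschitzWith.eval (i.succAbove j)
    exact LipschitzWith.of_edist_le fun x y => by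
      rw [edist_pi_le_iff]
      intro j
      simpa using this j x y
  have hFlip : LipschitzWith lam F := by
    intro x y
    rw [edist_pi_le_iff]
    intro i
    calc edist (F x i) (F y i)
        ≤ lam * edist (x ∘ i.succAbove) (y ∘ i.succAbove) := hlo i _ _
      _ ≤ lam * (1 * edist x y) := by
          exact mul_le_mul_right (by simpa using hres i x y) _
      _ = lam * edist x y := by rw [one_mul]
  have hC : ContractingWith lam F := ⟨hlam, hFlip⟩
  refine ⟨hC.fixedPoint F, fun i => ?_⟩
  have hfix : F (hC.fixedPoint F) = hC.fixedPoint F := hC.fixedPoint_isFixedPt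
  have hi : rlo i ((hC.fixedPoint F) ∘ i.succAbove) = hC.fixedPoint F i := by
    conv_rhs => rw [← hfix]
  exact ⟨hi.le, hi.symm.le.trans (hi ▸ hle i _)⟩
end

section
/- Let 0 ≤ λ < 1 and for i = 1,…,n let r̲ᵢ, r̄ᵢ : ℓ∞^{n-1} → ℝ be λ-Lipschitz with r̲ᵢ ≤ r̄ᵢ. Then Q = { x ∈ ℓ∞^n | r̲ᵢ(x̂ᵢ) ≤ xᵢ ≤ r̄ᵢ(x̂ᵢ) for all i } is a 1-Lipschitz retract of ℓ∞^n: there exists a 1-Lipschitz map Φ : ℓ∞^n → ℓ∞^n with Φ(x) ∈ Q for all x and Φ(x) = x for x ∈ Q. -/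
lemma clamp_dist (a a' b b' s t : ℝ) :
    dist (max a (min s b)) (max a' (min t b')) ≤ max (max (dist a a') (dist b b')) (dist s t) := by
  simp only [Real.dist_eq]
  calc |max a (min s b) - max a' (min t b')|
      ≤ max |a - a'| |min s b - min t b'| := abs_max_sub_max_le_max _ _ _ _
    _ ≤ max |a - a'| (max |s - t| |b - b'|) :=
        max_le_max le_rfl (abs_min_sub_min_le_max _ _ _ _)
    _ ≤ max (max |a - a'| |b - b'|) |s - t| :=
        max_le (le_max_of_le_left (le_max_left _ _))
          (max_le (le_max_right _ _) (le_max_of_le_left (le_max_right _ _)))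

lemma comp_dist_le {n : ℕ} (σ : Fin n → Fin (n + 1)) (y y' : Fin (n + 1) → ℝ) :
    dist (y ∘ σ) (y' ∘ σ) ≤ dist y y' :=
  (dist_pi_le_iff dist_nonneg).2 fun i => dist_le_pi_dist y y' (σ i)

/-- If all bounds `r̲ᵢ ≤ r̄ᵢ` are `λ`-Lipschitz with `λ < 1`, then
`Q = { x | r̲ᵢ(x̂ᵢ) ≤ xᵢ ≤ r̄ᵢ(x̂ᵢ) for all i }` is a 1-Lipschitz retract of `ℓ∞ⁿ`. -/
theorem system_retract {n : ℕ} (lam : NNReal) (hlam : lam < 1)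
    (rlo rhi : Fin (n + 1) → (Fin n → ℝ) → ℝ)
    (hlo : ∀ i, LipschitzWith lam (rlo i)) (hhi : ∀ i, LipschitzWith lam (rhi i))
    (hle : ∀ i (y : Fin n → ℝ), rlo i y ≤ rhi i y) :
    ∃ Φ : (Fin (n + 1) → ℝ) → (Fin (n + 1) → ℝ), LipschitzWith 1 Φ ∧
      (∀ x, Φ x ∈ {x : Fin (n + 1) → ℝ | ∀ i : Fin (n + 1),
        rlo i (x ∘ i.succAbove) ≤ x i ∧ x i ≤ rhi i (x ∘ i.succAbove)}) ∧
      (∀ x ∈ {x : Fin (n + 1) → ℝ | ∀ i : Fin (n + 1),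
        rlo i (x ∘ i.succAbove) ≤ x i ∧ x i ≤ rhi i (x ∘ i.succAbove)}, Φ x = x) := by
  have hlam1 : (lam : ℝ) < 1 := by exact_mod_cast hlam
  set F : (Fin (n + 1) → ℝ) → (Fin (n + 1) → ℝ) → (Fin (n + 1) → ℝ) :=
    fun x y i => max (rlo i (y ∘ i.succAbove)) (min (x i) (rhi i (y ∘ i.succAbove))) with hFdef
  -- coordinatewise estimate
  have coord : ∀ (x x' y y' : Fin (n + 1) → ℝ) (i : Fin (n + 1)),
      dist (F x y i) (F x' y' i) ≤ max ((lam : ℝ) * dist y y') (dist x x') := by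
    intro x x' y y' i
    refine (clamp_dist _ _ _ _ _ _).trans ?_
    have h1 : dist (rlo i (y ∘ i.succAbove)) (rlo i (y' ∘ i.succAbove)) ≤ (lam : ℝ) * dist y y' :=
      ((hlo i).dist_le_mul _ _).trans (by
        have := comp_dist_le i.succAbove y y'
        exact mul_le_mul_of_nonneg_left this lam.coe_nonneg)
    have h2 : dist (rhi i (y ∘ i.succAbove)) (rhi i (y' ∘ i.succAbove)) ≤ (lam : ℝ) * dist y y' :=
      ((hhi i).dist_le_mul _ _).trans (by
        have := comp_dist_le i.succAbove y y'
        exact mul_le_mul_of_nonneg_left this lam.coe_nonneg)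
    exact max_le_max (max_le h1 h2) (dist_le_pi_dist x x' i)
  have hF : ∀ x, ContractingWith lam (F x) := by
    intro x
    refine ⟨hlam, LipschitzWith.of_dist_le_mul fun y y' => ?_⟩
    refine (dist_pi_le_iff (by positivity)).2 fun i => ?_
    refine (coord x x y y' i).trans ?_
    simp [dist_self]
    positivity
  let Φ : (Fin (n + 1) → ℝ) → (Fin (n + 1) → ℝ) :=
    fun x => ContractingWith.fixedPoint (F x) (hF x)
  have hfix : ∀ x, F x (Φ x) = Φ x := fun x => (hF x).fixedPoint_isFixedPt
  refine ⟨Φ, ?_, ?_, ?_⟩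
  · -- 1-Lipschitz
    refine LipschitzWith.of_dist_le_mul fun x x' => ?_
    rw [NNReal.coe_one, one_mul]
    have hD : dist (Φ x) (Φ x') ≤ max ((lam : ℝ) * dist (Φ x) (Φ x')) (dist x x') := by
      refine (dist_pi_le_iff ?_).2 fun i => ?_
      · exact le_max_of_le_right dist_nonneg
      · calc dist (Φ x i) (Φ x' i) = dist (F x (Φ x) i) (F x' (Φ x') i) := by
              rw [hfix x, hfix x']
          _ ≤ _ := coord x x' (Φ x) (Φ x') i
    rcases max_cases ((lam : ℝ) * dist (Φ x) (Φ x')) (dist x x') with ⟨heq, _⟩ | ⟨heq, _⟩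
    · rw [heq] at hD
      nlinarith [dist_nonneg (x := x) (y := x'), dist_nonneg (x := Φ x) (y := Φ x')]
    · rwa [heq] at hD
  · -- membership
    intro x i
    constructor
    · conv_rhs => rw [← hfix x]
      exact le_max_left _ _
    · conv_lhs => rw [← hfix x]
      exact max_le (hle i _) (min_le_right _ _)
  · -- retraction
    intro x hx
    refine ((hF x).fixedPoint_unique ?_).symm
    funext i
    show max (rlo i (x ∘ i.succAbove)) (min (x i) (rhi i (x ∘ i.succAbove))) = x i
    rw [min_eq_left (hx i).2, max_eq_right (hx i).1]
end

section
/- With λ < 1 and the cyclic iteration Φ_m = φ_{[m]} ∘ Φ_{m-1} of the coordinate projections φᵢ (where [m] = ((m−1) mod n) + 1), the increments d_m = ‖Φ_m(x) − Φ_{m−1}(x)‖ satisfy, for all m > n: |d_m| ≤ λ · max{|d_{m−n+1}|, …, |d_{m−1}|}. -/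
/-- The single-coordinate projection `φᵢ`: replace the `i`-th coordinate of `x` by its
projection onto the interval `[r̲ᵢ(x̂ᵢ), r̄ᵢ(x̂ᵢ)]`, leaving the other coordinates fixed. -/
def coordProj {n : ℕ} (rlo rhi : Fin (n + 1) → (Fin n → ℝ) → ℝ)
    (i : Fin (n + 1)) (x : Fin (n + 1) → ℝ) : Fin (n + 1) → ℝ :=
  Function.update x i (min (max (rlo i (x ∘ i.succAbove)) (x i)) (rhi i (x ∘ i.succAbove)))

/-- The cyclic iteration `Φ_m = φ_{[m]} ∘ Φ_{m-1}` with `Φ₀ = id`, where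
`[m] = ((m-1) mod (n+1)) + 1` (0-indexed: `(m-1) mod (n+1)`). -/
def cyclicIter {n : ℕ} (rlo rhi : Fin (n + 1) → (Fin n → ℝ) → ℝ) :
    ℕ → (Fin (n + 1) → ℝ) → (Fin (n + 1) → ℝ)
  | 0 => id
  | m + 1 => coordProj rlo rhi ⟨m % (n + 1), Nat.mod_lt m (Nat.succ_pos n)⟩ ∘
      cyclicIter rlo rhi m

private lemma mod_ne_of_between {N k l : ℕ} (h1 : k < l) (h2 : l < k + N) :
    k % N ≠ l % N := by
  intro h
  have hd : N ∣ l - k := (Nat.modEq_iff_dvd' h1.le).mp h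
  have := Nat.le_of_dvd (by omega) hd
  omega

private lemma clamp_dist_s13 {a b a' b' t c : ℝ} (hab : a ≤ b) (ht1 : a' ≤ t) (ht2 : t ≤ b')
    (h1 : |a - a'| ≤ c) (h2 : |b - b'| ≤ c) : |min (max a t) b - t| ≤ c := by
  have c0 : (0:ℝ) ≤ c := le_trans (abs_nonneg _) h1
  rw [abs_le] at h1 h2 ⊢
  constructor
  · have hmin : min t b ≤ min (max a t) b := min_le_min (le_max_right a t) le_rfl
    have : t - c ≤ min t b := le_min (by linarith) (by linarith)
    linarith
  · have hmax : max a t ≤ t + c := max_le (by linarith) (by linarith)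
    have := min_le_left (max a t) b
    linarith

private lemma cyclicIter_apply_congr {n : ℕ} (rlo rhi : Fin (n + 1) → (Fin n → ℝ) → ℝ)
    (x : Fin (n + 1) → ℝ) (j : Fin (n + 1)) :
    ∀ b a, a ≤ b → (∀ k, a ≤ k → k < b → k % (n + 1) ≠ j.val) →
      cyclicIter rlo rhi b x j = cyclicIter rlo rhi a x j := by
  intro b
  induction b with
  | zero => intro a ha _; simp [Nat.le_zero.mp ha]
  | succ b ih =>
    intro a ha h
    rcases Nat.eq_or_lt_of_le ha with h' | h'
    · rw [h']
    · have hb : a ≤ b := by omega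
      have step : cyclicIter rlo rhi (b + 1) x j = cyclicIter rlo rhi b x j := by
        show coordProj rlo rhi _ (cyclicIter rlo rhi b x) j = _
        unfold coordProj
        rw [Function.update_of_ne]
        intro hj
        exact h b hb (Nat.lt_succ_self b) ((congrArg Fin.val hj).symm)
      rw [step, ih a hb (fun k hk1 hk2 => h k hk1 (by omega))]

private lemma cyclicIter_succ_apply {n : ℕ} (rlo rhi : Fin (n + 1) → (Fin n → ℝ) → ℝ)
    (x : Fin (n + 1) → ℝ) (k : ℕ) :
    cyclicIter rlo rhi (k + 1) x =
      coordProj rlo rhi ⟨k % (n + 1), Nat.mod_lt k (Nat.succ_pos n)⟩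
        (cyclicIter rlo rhi k x) := rfl

/-- With `λ < 1` and `N = n + 1` coordinates, the increments
`d_m = ‖Φ_m(x) − Φ_{m−1}(x)‖` satisfy, for `m > N`,
`d_m ≤ λ · max{d_{m−N+1}, …, d_{m−1}}`. -/
theorem cyclicIter_increment_bound {n : ℕ} (hn : 0 < n) (lam : NNReal) (hlam : lam < 1)
    (rlo rhi : Fin (n + 1) → (Fin n → ℝ) → ℝ)
    (hlo : ∀ i, LipschitzWith lam (rlo i)) (hhi : ∀ i, LipschitzWith lam (rhi i))
    (hle : ∀ i (y : Fin n → ℝ), rlo i y ≤ rhi i y)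
    (x : Fin (n + 1) → ℝ) (m : ℕ) (hm : n + 1 < m) :
    dist (cyclicIter rlo rhi m x) (cyclicIter rlo rhi (m - 1) x) ≤
      lam * (Finset.Ico (m - (n + 1) + 1) m).sup'
        (Finset.nonempty_Ico.mpr (by omega))
        (fun k => dist (cyclicIter rlo rhi k x) (cyclicIter rlo rhi (k - 1) x)) := by
  obtain ⟨M, rfl⟩ : ∃ M, m = M + 1 := ⟨m - 1, by omega⟩
  have hM : n + 1 ≤ M := by omega
  simp only [Nat.add_sub_cancel]
  suffices H : ∀ hne : (Finset.Ico (M + 1 - (n + 1) + 1) (M + 1)).Nonempty,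
      dist (cyclicIter rlo rhi (M + 1) x) (cyclicIter rlo rhi M x) ≤
        lam * (Finset.Ico (M + 1 - (n + 1) + 1) (M + 1)).sup' hne
          (fun k => dist (cyclicIter rlo rhi k x) (cyclicIter rlo rhi (k - 1) x)) by
    exact H _
  intro hne
  set S := (Finset.Ico (M + 1 - (n + 1) + 1) (M + 1)).sup' hne
      (fun k => dist (cyclicIter rlo rhi k x) (cyclicIter rlo rhi (k - 1) x)) with hS
  have hmemM : M ∈ Finset.Ico (M + 1 - (n + 1) + 1) (M + 1) :=
    Finset.mem_Ico.mpr ⟨by omega, by omega⟩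
  have hS0 : 0 ≤ S := le_trans dist_nonneg (Finset.le_sup'
    (fun k => dist (cyclicIter rlo rhi k x) (cyclicIter rlo rhi (k - 1) x)) hmemM)
  set i : Fin (n + 1) := ⟨M % (n + 1), Nat.mod_lt M (Nat.succ_pos n)⟩ with hidef
  set y := cyclicIter rlo rhi M x with hy
  set z := cyclicIter rlo rhi (M - n - 1) x with hz
  have hmlt : M % (n + 1) < n + 1 := Nat.mod_lt M (Nat.succ_pos n)
  have hmod : (M - n - 1) % (n + 1) = M % (n + 1) := by
    conv_rhs => rw [show M = (M - n - 1) + (n + 1) by omega]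
    rw [Nat.add_mod_right]
  -- value of y at coordinate i
  have h1 : y i = cyclicIter rlo rhi (M - n) x i := by
    apply cyclicIter_apply_congr rlo rhi x i M (M - n) (by omega)
    intro k hk1 hk2
    exact mod_ne_of_between (show k < M by omega) (show M < k + (n + 1) by omega)
  have h2 : cyclicIter rlo rhi (M - n) x i =
      min (max (rlo i (z ∘ i.succAbove)) (z i)) (rhi i (z ∘ i.succAbove)) := by
    have e : M - n = (M - n - 1) + 1 := by omega
    rw [e, cyclicIter_succ_apply,
      show (⟨(M - n - 1) % (n + 1), Nat.mod_lt _ (Nat.succ_pos n)⟩ : Fin (n + 1)) = i from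
        Fin.ext hmod]
    unfold coordProj
    rw [Function.update_self]
  have hyi := h1.trans h2
  have hyb1 : rlo i (z ∘ i.succAbove) ≤ y i := by
    rw [hyi]; exact le_min (le_max_left _ _) (hle i _)
  have hyb2 : y i ≤ rhi i (z ∘ i.succAbove) := by
    rw [hyi]; exact min_le_right _ _
  -- coordinates other than i
  have hcoord : ∀ j' : Fin n, dist (y (i.succAbove j')) (z (i.succAbove j')) ≤ S := by
    intro j'
    set j := i.succAbove j' with hj
    have hji : j ≠ i := Fin.succAbove_ne i j'
    have hjv : j.val ≠ M % (n + 1) := fun h => hji (Fin.ext h)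
    have hjlt : j.val < n + 1 := j.isLt
    have hdm := Nat.div_add_mod M (n + 1)
    obtain ⟨k, hk1, hk2, hk3⟩ : ∃ k, M - n ≤ k ∧ k < M ∧ k % (n + 1) = j.val := by
      by_cases hcase : j.val < M % (n + 1)
      · refine ⟨(n + 1) * (M / (n + 1)) + j.val, by omega, by omega, ?_⟩
        rw [Nat.mul_add_mod, Nat.mod_eq_of_lt hjlt]
      · have hq : 1 ≤ M / (n + 1) := (Nat.one_le_div_iff (Nat.succ_pos n)).mpr hM
        have hDge : n + 1 ≤ (n + 1) * (M / (n + 1)) := Nat.le_mul_of_pos_right _ hq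
        have hmul : (n + 1) * (M / (n + 1) - 1) = (n + 1) * (M / (n + 1)) - (n + 1) := by
          rw [Nat.mul_sub, mul_one]
        refine ⟨(n + 1) * (M / (n + 1) - 1) + j.val, by omega, by omega, ?_⟩
        rw [Nat.mul_add_mod, Nat.mod_eq_of_lt hjlt]
    have hyj : y j = cyclicIter rlo rhi (k + 1) x j := by
      apply cyclicIter_apply_congr rlo rhi x j M (k + 1) (by omega)
      intro l hl1 hl2 hlj
      exact mod_ne_of_between (show k < l by omega) (show l < k + (n + 1) by omega)
        (hk3.trans hlj.symm)
    have hzj : z j = cyclicIter rlo rhi k x j := by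
      apply Eq.symm
      apply cyclicIter_apply_congr rlo rhi x j k (M - n - 1) (by omega)
      intro l hl1 hl2 hlj
      rcases Nat.eq_or_lt_of_le hl1 with h' | h'
      · exact hjv (by rw [← hlj, ← h', hmod])
      · exact mod_ne_of_between (show l < k by omega) (show k < l + (n + 1) by omega)
          (hlj.trans hk3.symm)
    have hmemk : k + 1 ∈ Finset.Ico (M + 1 - (n + 1) + 1) (M + 1) :=
      Finset.mem_Ico.mpr ⟨by omega, by omega⟩
    calc dist (y j) (z j)
        = dist (cyclicIter rlo rhi (k + 1) x j) (cyclicIter rlo rhi k x j) := by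
          rw [← hyj, ← hzj]
      _ ≤ dist (cyclicIter rlo rhi (k + 1) x) (cyclicIter rlo rhi k x) :=
          dist_le_pi_dist _ _ j
      _ ≤ S :=
          Finset.le_sup'
            (fun k => dist (cyclicIter rlo rhi k x) (cyclicIter rlo rhi (k - 1) x)) hmemk
  have hhat : dist (y ∘ i.succAbove) (z ∘ i.succAbove) ≤ S :=
    (dist_pi_le_iff hS0).mpr fun j' => hcoord j'
  -- final bound
  have hstep : cyclicIter rlo rhi (M + 1) x = coordProj rlo rhi i y := rfl
  rw [hstep, dist_pi_le_iff (mul_nonneg lam.coe_nonneg hS0)]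
  intro j
  by_cases hj : j = i
  · rw [hj]
    have hupd : coordProj rlo rhi i y i =
        min (max (rlo i (y ∘ i.succAbove)) (y i)) (rhi i (y ∘ i.succAbove)) :=
      Function.update_self _ _ _
    rw [hupd, Real.dist_eq]
    apply clamp_dist_s13 (hle i _) hyb1 hyb2
    · calc |rlo i (y ∘ i.succAbove) - rlo i (z ∘ i.succAbove)|
          = dist (rlo i (y ∘ i.succAbove)) (rlo i (z ∘ i.succAbove)) := (Real.dist_eq _ _).symm
        _ ≤ lam * dist (y ∘ i.succAbove) (z ∘ i.succAbove) := (hlo i).dist_le_mul _ _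
        _ ≤ lam * S := mul_le_mul_of_nonneg_left hhat lam.coe_nonneg
    · calc |rhi i (y ∘ i.succAbove) - rhi i (z ∘ i.succAbove)|
          = dist (rhi i (y ∘ i.succAbove)) (rhi i (z ∘ i.succAbove)) := (Real.dist_eq _ _).symm
        _ ≤ lam * dist (y ∘ i.succAbove) (z ∘ i.succAbove) := (hhi i).dist_le_mul _ _
        _ ≤ lam * S := mul_le_mul_of_nonneg_left hhat lam.coe_nonneg
  · have hne' : coordProj rlo rhi i y j = y j := Function.update_of_ne hj _ _
    rw [hne', dist_self]
    exact mul_nonneg lam.coe_nonneg hS0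
end

section
/- For i ∈ {1,…,n}, let r̲ᵢ, r̄ᵢ : ℓ∞^{n-1} → ℝ be bounded 1-Lipschitz maps with r̲ᵢ ≤ r̄ᵢ. Then the set Q = { x ∈ ℓ∞^n | r̲ᵢ(x̂ᵢ) ≤ xᵢ ≤ r̄ᵢ(x̂ᵢ) for all i } is nonempty and compact. -/
/-- If the 1-Lipschitz bounds `r̲ᵢ ≤ r̄ᵢ` are uniformly bounded (below and above resp.),
then `Q = { x | r̲ᵢ(x̂ᵢ) ≤ xᵢ ≤ r̄ᵢ(x̂ᵢ) for all i }` is nonempty and compact. -/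
theorem bounded_system_nonempty_compact {n : ℕ}
    (rlo rhi : Fin (n + 1) → (Fin n → ℝ) → ℝ)
    (hlo : ∀ i, LipschitzWith 1 (rlo i)) (hhi : ∀ i, LipschitzWith 1 (rhi i))
    (hle : ∀ i (y : Fin n → ℝ), rlo i y ≤ rhi i y)
    (l u : ℝ) (hbdd : ∀ i (y : Fin n → ℝ), l ≤ rlo i y ∧ rhi i y ≤ u) :
    ({x : Fin (n + 1) → ℝ | ∀ i : Fin (n + 1),
        rlo i (x ∘ i.succAbove) ≤ x i ∧ x i ≤ rhi i (x ∘ i.succAbove)}).Nonempty ∧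
    IsCompact {x : Fin (n + 1) → ℝ | ∀ i : Fin (n + 1),
        rlo i (x ∘ i.succAbove) ≤ x i ∧ x i ≤ rhi i (x ∘ i.succAbove)} := by
  set Q : Set (Fin (n + 1) → ℝ) := {x : Fin (n + 1) → ℝ | ∀ i : Fin (n + 1),
        rlo i (x ∘ i.succAbove) ≤ x i ∧ x i ≤ rhi i (x ∘ i.succAbove)} with hQ
  have hlu : l ≤ u := by
    have h1 := (hbdd 0 0).1
    have h2 := (hbdd 0 0).2
    linarith [hle 0 0]
  -- the compact box
  set K : Set (Fin (n + 1) → ℝ) := Set.pi Set.univ (fun _ => Set.Icc l u) with hK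
  have hKcomp : IsCompact K := isCompact_univ_pi fun _ => isCompact_Icc
  -- the clamping map
  set F : (Fin (n + 1) → ℝ) → (Fin (n + 1) → ℝ) :=
    fun x i => max (rlo i (x ∘ i.succAbove)) (min (x i) (rhi i (x ∘ i.succAbove))) with hFdef
  have hproj : ∀ (x y : Fin (n + 1) → ℝ) (i : Fin (n + 1)),
      dist (x ∘ i.succAbove) (y ∘ i.succAbove) ≤ dist x y := by
    intro x y i
    rw [dist_pi_le_iff dist_nonneg]
    intro j
    exact dist_le_pi_dist x y _
  have hF : LipschitzWith 1 F := by
    rw [lipschitzWith_iff_dist_le_mul]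
    intro x y
    rw [NNReal.coe_one, one_mul, dist_pi_le_iff dist_nonneg]
    intro i
    have hl : dist (rlo i (x ∘ i.succAbove)) (rlo i (y ∘ i.succAbove)) ≤ dist x y := by
      have := (hlo i).dist_le_mul (x ∘ i.succAbove) (y ∘ i.succAbove)
      simpa using this.trans (by simpa using hproj x y i)
    have hh : dist (rhi i (x ∘ i.succAbove)) (rhi i (y ∘ i.succAbove)) ≤ dist x y := by
      have := (hhi i).dist_le_mul (x ∘ i.succAbove) (y ∘ i.succAbove)
      simpa using this.trans (by simpa using hproj x y i)
    have hxy : dist (x i) (y i) ≤ dist x y := dist_le_pi_dist x y i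
    have h1 := abs_max_sub_max_le_max (rlo i (x ∘ i.succAbove))
      (min (x i) (rhi i (x ∘ i.succAbove))) (rlo i (y ∘ i.succAbove))
      (min (y i) (rhi i (y ∘ i.succAbove)))
    have h2 := abs_min_sub_min_le_max (x i) (rhi i (x ∘ i.succAbove))
      (y i) (rhi i (y ∘ i.succAbove))
    rw [Real.dist_eq] at hl hh hxy ⊢
    simp only [hFdef]
    calc |max (rlo i (x ∘ i.succAbove)) (min (x i) (rhi i (x ∘ i.succAbove))) -
          max (rlo i (y ∘ i.succAbove)) (min (y i) (rhi i (y ∘ i.succAbove)))| ≤ _ := h1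
      _ ≤ dist x y := by
          apply max_le hl
          exact h2.trans (max_le hxy hh)
  have hFmem : ∀ x i, F x i ∈ Set.Icc l u := by
    intro x i
    constructor
    · exact le_trans (hbdd i _).1 (le_max_left _ _)
    · apply max_le
      · exact le_trans (hle i _) (hbdd i _).2
      · exact le_trans (min_le_right _ _) (hbdd i _).2
  -- contraction approximations
  have key : ∀ k : ℕ, ∃ z : Fin (n + 1) → ℝ, (∀ i, z i ∈ Set.Icc l u) ∧
      dist (F z) z ≤ (u - l) / (k + 2) := by
    intro k
    set r : ℝ := (k + 1) / (k + 2) with hr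
    have hk2 : (0:ℝ) < (k:ℝ) + 2 := by positivity
    have hr0 : 0 ≤ r := by positivity
    have hr1 : r < 1 := by rw [hr, div_lt_one hk2]; linarith
    have h1r : 1 - r = 1 / (k + 2) := by rw [hr]; field_simp; norm_num
    set G : (Fin (n + 1) → ℝ) → (Fin (n + 1) → ℝ) :=
      fun x i => r * F x i + (1 - r) * l with hGdef
    have hrnn : (⟨r, hr0⟩ : NNReal) < 1 := by
      exact hr1
    have hG : ContractingWith ⟨r, hr0⟩ G := by
      constructor
      · exact hrnn
      · apply LipschitzWith.of_dist_le_mul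
        intro x y
        rw [dist_pi_le_iff (by positivity)]
        intro i
        have h1 : dist (G x i) (G y i) = r * dist (F x i) (F y i) := by
          simp only [hGdef, Real.dist_eq]
          rw [show r * F x i + (1 - r) * l - (r * F y i + (1 - r) * l)
              = r * (F x i - F y i) by ring, abs_mul, abs_of_nonneg hr0]
        rw [h1]
        have h2 : dist (F x i) (F y i) ≤ dist x y := by
          have := hF.dist_le_mul x y
          rw [NNReal.coe_one, one_mul] at this
          exact (dist_le_pi_dist (F x) (F y) i).trans this
        calc r * dist (F x i) (F y i) ≤ r * dist x y := by
              exact mul_le_mul_of_nonneg_left h2 hr0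
          _ = _ := rfl
    set z := ContractingWith.fixedPoint G hG with hz
    have hfix : G z = z := hG.fixedPoint_isFixedPt
    have hzi : ∀ i, z i = r * F z i + (1 - r) * l := by
      intro i; conv_lhs => rw [← hfix]
    refine ⟨z, ?_, ?_⟩
    · intro i
      have := hFmem z i
      rw [hzi i]
      constructor
      · nlinarith [this.1, this.2]
      · nlinarith [this.1, this.2]
    · rw [dist_pi_le_iff (div_nonneg (by linarith) (by positivity))]
      intro i
      have hFi := hFmem z i
      rw [Real.dist_eq, hzi i]
      have : F z i - (r * F z i + (1 - r) * l) = (1 - r) * (F z i - l) := by ring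
      rw [this, abs_mul, abs_of_nonneg (by linarith), h1r]
      have h2 : |F z i - l| ≤ u - l := by
        rw [abs_of_nonneg (by linarith [hFi.1])]; linarith [hFi.2]
      calc 1 / ((k:ℝ) + 2) * |F z i - l| ≤ 1 / ((k:ℝ) + 2) * (u - l) := by
            apply mul_le_mul_of_nonneg_left h2 (by positivity)
        _ = (u - l) / ((k:ℝ) + 2) := by ring
  choose z hzK hzd using key
  have hzK' : ∀ k, z k ∈ K := by
    intro k; rw [hK]; intro i _; exact hzK k i
  obtain ⟨x, hxK, φ, hφ, hlim⟩ := hKcomp.tendsto_subseq hzK'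
  -- F x = x
  have h1 : Filter.Tendsto (fun k => F (z (φ k))) Filter.atTop (nhds (F x)) :=
    (hF.continuous.tendsto x).comp hlim
  have hφtop : Filter.Tendsto (fun k => ((φ k : ℝ) + 2)) Filter.atTop Filter.atTop := by
    apply Filter.tendsto_atTop_add_const_right
    exact tendsto_natCast_atTop_atTop.comp hφ.tendsto_atTop
  have hd1 : Filter.Tendsto (fun k => (u - l) / ((φ k : ℝ) + 2)) Filter.atTop (nhds 0) :=
    Filter.Tendsto.div_atTop tendsto_const_nhds hφtop
  have hd2 : Filter.Tendsto (fun k => dist (z (φ k)) x) Filter.atTop (nhds 0) := by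
    rw [← tendsto_iff_dist_tendsto_zero]; exact hlim
  have h2 : Filter.Tendsto (fun k => F (z (φ k))) Filter.atTop (nhds x) := by
    rw [tendsto_iff_dist_tendsto_zero]
    apply squeeze_zero (fun _ => dist_nonneg)
      (g := fun k => (u - l) / ((φ k : ℝ) + 2) + dist (z (φ k)) x)
    · intro k
      calc dist (F (z (φ k))) x ≤ dist (F (z (φ k))) (z (φ k)) + dist (z (φ k)) x :=
            dist_triangle _ _ _
        _ ≤ _ := by
            have := hzd (φ k)
            gcongr
    · simpa using hd1.add hd2
  have hfix : F x = x := tendsto_nhds_unique h1 h2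
  have hxQ : x ∈ Q := by
    intro i
    have hxi : x i = max (rlo i (x ∘ i.succAbove)) (min (x i) (rhi i (x ∘ i.succAbove))) := by
      conv_lhs => rw [← hfix]
    constructor
    · rw [hxi]; exact le_max_left _ _
    · by_contra h
      push_neg at h
      have : min (x i) (rhi i (x ∘ i.succAbove)) = rhi i (x ∘ i.succAbove) :=
        min_eq_right h.le
      rw [this, max_eq_right (hle i _)] at hxi
      linarith
  refine ⟨⟨x, hxQ⟩, ?_⟩
  -- compactness
  have hQclosed : IsClosed Q := by
    have : Q = ⋂ i : Fin (n + 1), ({x : Fin (n + 1) → ℝ | rlo i (x ∘ i.succAbove) ≤ x i} ∩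
        {x : Fin (n + 1) → ℝ | x i ≤ rhi i (x ∘ i.succAbove)}) := by
      ext y; simp only [hQ, Set.mem_setOf_eq, Set.mem_iInter, Set.mem_inter_iff]
    rw [this]
    apply isClosed_iInter
    intro i
    have hc : Continuous fun y : Fin (n + 1) → ℝ => y ∘ i.succAbove :=
      continuous_pi fun j => continuous_apply _
    exact ((isClosed_le ((hlo i).continuous.comp hc) (continuous_apply i)).inter
      (isClosed_le (continuous_apply i) ((hhi i).continuous.comp hc)))
  apply hKcomp.of_isClosed_subset hQclosed
  intro y hy i _
  exact ⟨le_trans (hbdd i _).1 (hy i).1, le_trans (hy i).2 (hbdd i _).2⟩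
end

section
/- Let q = 0 ∈ Q where Q = { x ∈ ℓ∞^n | r̲ᵢ(x̂ᵢ) ≤ xᵢ ≤ r̄ᵢ(x̂ᵢ) for all i } with r̲ᵢ, r̄ᵢ 1-Lipschitz and r̲ᵢ ≤ r̄ᵢ. Then for every r > 0, Q ∩ B(0,r) = { x ∈ ℓ∞^n | min(max(−r, r̲ᵢ(x̂ᵢ)), r) ≤ xᵢ ≤ min(max(−r, r̄ᵢ(x̂ᵢ)), r) for all i }, i.e., the intersection of Q with the closed ball of radius r is again cut out by truncated 1-Lipschitz bounds. -/
open Metric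

/-- If `0 ∈ Q` where `Q` is cut out by 1-Lipschitz bounds `r̲ᵢ ≤ r̄ᵢ`, then for every
`r > 0` the intersection `Q ∩ B(0,r)` is cut out by the bounds truncated to `[-r, r]`. -/
theorem ball_intersection_eq {n : ℕ}
    (rlo rhi : Fin (n + 1) → (Fin n → ℝ) → ℝ)
    (hlo : ∀ i, LipschitzWith 1 (rlo i)) (hhi : ∀ i, LipschitzWith 1 (rhi i))
    (hle : ∀ i (y : Fin n → ℝ), rlo i y ≤ rhi i y)
    (h0 : (0 : Fin (n + 1) → ℝ) ∈ {x : Fin (n + 1) → ℝ | ∀ i : Fin (n + 1),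
        rlo i (x ∘ i.succAbove) ≤ x i ∧ x i ≤ rhi i (x ∘ i.succAbove)})
    (r : ℝ) (hr : 0 < r) :
    {x : Fin (n + 1) → ℝ | ∀ i : Fin (n + 1),
        rlo i (x ∘ i.succAbove) ≤ x i ∧ x i ≤ rhi i (x ∘ i.succAbove)} ∩
      closedBall (0 : Fin (n + 1) → ℝ) r =
    {x : Fin (n + 1) → ℝ | ∀ i : Fin (n + 1),
        min (max (-r) (rlo i (x ∘ i.succAbove))) r ≤ x i ∧
        x i ≤ min (max (-r) (rhi i (x ∘ i.succAbove))) r} := by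
  have key : ∀ (f : (Fin n → ℝ) → ℝ), LipschitzWith 1 f →
      ∀ (i : Fin (n + 1)) (x : Fin (n + 1) → ℝ), (∀ j, |x j| ≤ r) →
      |f (x ∘ i.succAbove) - f ((0 : Fin (n + 1) → ℝ) ∘ i.succAbove)| ≤ r := by
    intro f hf i x hx
    have h1 := hf.dist_le_mul (x ∘ i.succAbove) ((0 : Fin (n + 1) → ℝ) ∘ i.succAbove)
    rw [Real.dist_eq, NNReal.coe_one, one_mul] at h1
    refine h1.trans ?_
    rw [dist_pi_le_iff hr.le]
    intro j
    simpa [Real.dist_eq] using hx (i.succAbove j)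
  ext x
  simp only [Set.mem_inter_iff, Set.mem_setOf_eq, mem_closedBall]
  constructor
  · rintro ⟨hQ, hball⟩ i
    have hb : ∀ j, |x j| ≤ r := by
      intro j
      have := (dist_pi_le_iff hr.le).mp hball j
      simpa [Real.dist_eq] using this
    have hbi := abs_le.mp (hb i)
    exact ⟨(min_le_left _ _).trans (max_le hbi.1 (hQ i).1),
      le_min (le_max_of_le_right (hQ i).2) hbi.2⟩
  · intro h
    have hb : ∀ j, |x j| ≤ r := fun j => abs_le.mpr
      ⟨le_trans (le_min (le_max_left _ _) (neg_le_self hr.le)) (h j).1,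
       (h j).2.trans (min_le_right _ _)⟩
    refine ⟨fun i => ?_, ?_⟩
    · have klo := abs_le.mp (key _ (hlo i) i x hb)
      have khi := abs_le.mp (key _ (hhi i) i x hb)
      have h0i := h0 i
      simp only [Pi.zero_apply] at h0i
      have hlor : rlo i (x ∘ i.succAbove) ≤ r := by linarith [h0i.1, klo.2]
      have hhir : -r ≤ rhi i (x ∘ i.succAbove) := by linarith [h0i.2, khi.1]
      constructor
      · exact le_trans (le_min (le_max_right _ _) hlor) (h i).1
      · exact (h i).2.trans ((min_le_left _ _).trans (max_le hhir le_rfl))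
    · rw [dist_pi_le_iff hr.le]
      intro j
      simpa [Real.dist_eq] using hb j
end

section
/- In ℓ∞^n, for any x ∈ ℝ^n and index i, the cone C(x,+i) = { x + b eᵢ + y | b ≥ 0, yᵢ = 0, ‖y‖ ≤ b } is contained in C(p, x) = { q | ‖p − q‖ = ‖p − x‖ + ‖x − q‖ } whenever p ∈ C(x, −i), i.e., whenever p = x − b eᵢ + y with b ≥ 0, yᵢ = 0, ‖y‖ ≤ b. -/
lemma aux_norm_eq {n : ℕ} (i : Fin n) (c : ℝ) (z : Fin n → ℝ)
    (hc : 0 ≤ c) (hzi : z i = 0) (hz : ‖z‖ ≤ c) :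
    ‖z - c • (Pi.single i 1 : Fin n → ℝ)‖ = c := by
  apply le_antisymm
  · apply pi_norm_le_iff_of_nonneg hc |>.2
    intro j
    by_cases h : j = i
    · subst h
      simp [hzi, abs_of_nonneg hc]
    · simp only [Pi.sub_apply, Pi.smul_apply, Pi.single_eq_of_ne h,
        smul_eq_mul, mul_zero, sub_zero]
      calc ‖z j‖ ≤ ‖z‖ := norm_le_pi_norm z j
        _ ≤ c := hz
  · calc c = ‖(z - c • (Pi.single i 1 : Fin n → ℝ)) i‖ := by
          simp [hzi, abs_of_nonneg hc]
      _ ≤ _ := norm_le_pi_norm _ i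

/-- In `ℓ∞ⁿ`, if `p ∈ C(x,−i)`, i.e. `p = x − b' eᵢ + y'` with `b' ≥ 0`, `y'ᵢ = 0`,
`‖y'‖ ≤ b'`, then the cone `C(x,+i)` is contained in `C(p, x)`. -/
theorem cone_subset_cone {n : ℕ} (x : Fin n → ℝ) (i : Fin n)
    (p : Fin n → ℝ) (b' : ℝ) (y' : Fin n → ℝ)
    (hb' : 0 ≤ b') (hy'i : y' i = 0) (hy' : ‖y'‖ ≤ b')
    (hp : p = x - b' • (Pi.single i 1 : Fin n → ℝ) + y') :
    {q : Fin n → ℝ | ∃ (b : ℝ) (y : Fin n → ℝ),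
        0 ≤ b ∧ y i = 0 ∧ ‖y‖ ≤ b ∧ q = x + b • (Pi.single i 1 : Fin n → ℝ) + y} ⊆
    {q : Fin n → ℝ | ‖p - q‖ = ‖p - x‖ + ‖x - q‖} := by
  rintro q ⟨b, y, hb, hyi, hy, rfl⟩
  have h1 : p - x = y' - b' • (Pi.single i 1 : Fin n → ℝ) := by
    rw [hp]; abel
  have h2 : x - (x + b • (Pi.single i 1 : Fin n → ℝ) + y)
      = (-y) - b • (Pi.single i 1 : Fin n → ℝ) := by abel
  have h3 : p - (x + b • (Pi.single i 1 : Fin n → ℝ) + y)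
      = (y' - y) - (b' + b) • (Pi.single i 1 : Fin n → ℝ) := by
    rw [hp, add_smul]; abel
  show ‖_‖ = ‖_‖ + ‖_‖
  rw [h1, h2, h3,
    aux_norm_eq i b' y' hb' hy'i hy',
    aux_norm_eq i b (-y) hb (by simp [hyi]) (by simpa using hy),
    aux_norm_eq i (b' + b) (y' - y) (by linarith) (by simp [hyi, hy'i])
      (le_trans (norm_sub_le _ _) (by linarith))]
end
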